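/- There is no contravariant functor F from the category of (possibly noncommutative) rings to the category of sets whose restriction to the full subcategory of commutative rings is naturally isomorphic to the prime spectrum functor Spec and which satisfies either of the following conditions: (1) for some field k and some integer n ≥ 2, the set F(Mₙ(k)) has exactly one element; (2) F is Morita invariant, i.e. F(R) is in bijection with F(S) whenever R and S are Morita equivalent rings (so that in particular F(Mₙ(k)) ≅ F(k) for every field k and n ≥ 2). -/

import Mathlib

open CategoryTheory

/-- The prime spectrum, as a contravariant functor from commutative rings to sets. -/
def SpecFunctor : CommRingCatᵒᵖ ⥤ Type where
  obj C := PrimeSpectrum C.unop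
  map f := TypeCat.ofHom fun P => ⟨P.asIdeal.comap f.unop.hom, P.isPrime.comap _⟩

namespace NoSpecAux

/-! ### The Morita equivalence between `K` and `Matrix (Fin n) (Fin n) K` -/

section Morita

variable (K : Type) [CommRing K] (n : ℕ) [NeZero n]

variable {M : Type} [AddCommGroup M] [Module K M]

instance matSMul : SMul (Matrix (Fin n) (Fin n) K) (Fin n → M) :=
  ⟨fun A v i => ∑ j, A i j • v j⟩

omit [NeZero n] in
variable {K n} in
lemma matSMul_apply (A : Matrix (Fin n) (Fin n) K) (v : Fin n → M) (i : Fin n) :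
    (A • v) i = ∑ j, A i j • v j := rfl

instance matModule : Module (Matrix (Fin n) (Fin n) K) (Fin n → M) where
  smul := (· • ·)
  one_smul v := funext fun i => by
    simp [matSMul_apply, Matrix.one_apply, ite_smul]
  mul_smul A B v := funext fun i => by
    simp only [matSMul_apply, Matrix.mul_apply, Finset.sum_smul, Finset.smul_sum, mul_smul]
    exact Finset.sum_comm
  smul_zero A := funext fun i => by simp [matSMul_apply]
  smul_add A v w := funext fun i => by
    simp [matSMul_apply, smul_add, Finset.sum_add_distrib]
  add_smul A B v := funext fun i => by
    simp [matSMul_apply, add_smul, Finset.sum_add_distrib]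
  zero_smul v := funext fun i => by simp [matSMul_apply]

omit [NeZero n] in
variable {K n} in
lemma algebraMap_matSMul (a : K) (v : Fin n → M) :
    (algebraMap K (Matrix (Fin n) (Fin n) K) a) • v = fun i => a • v i := funext fun i => by
  simp [matSMul_apply, Matrix.algebraMap_matrix_apply, ite_smul]

/-- The functor `M ↦ Mⁿ` from `K`-modules to `Mₙ(K)`-modules. -/
def toMatMod : ModuleCat.{0} K ⥤ ModuleCat.{0} (Matrix (Fin n) (Fin n) K) where
  obj M := ModuleCat.of (Matrix (Fin n) (Fin n) K) (Fin n → M)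
  map {M M'} f := ModuleCat.ofHom
    { toFun := fun v i => f.hom (v i)
      map_add' := fun v w => funext fun i => map_add f.hom _ _
      map_smul' := fun A v => funext fun i => by
        show f.hom (∑ j, A i j • v j) = ∑ j, A i j • f.hom (v j)
        rw [map_sum]; simp only [map_smul] }
  map_id M := by ext v; rfl
  map_comp f g := by ext v; rfl

/-- The corner idempotent `E₀₀`. -/
def eM : Matrix (Fin n) (Fin n) K := Matrix.single 0 0 1

variable (N : Type) [AddCommGroup N] [Module (Matrix (Fin n) (Fin n) K) N]

/-- The corner `E₀₀ • N` as an additive subgroup of `N`. -/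
def cornerSub : AddSubgroup N where
  carrier := {x | eM K n • x = x}
  add_mem' {a b} ha hb := by simp only [Set.mem_setOf_eq, smul_add] at *; rw [ha, hb]
  zero_mem' := smul_zero _
  neg_mem' {a} ha := by simp only [Set.mem_setOf_eq, smul_neg] at *; rw [ha]

variable {K n N} in
lemma corner_prop (x : cornerSub K n N) : eM K n • (x.1 : N) = x.1 := x.2

instance : SMul K (cornerSub K n N) :=
  ⟨fun a x => ⟨algebraMap K (Matrix (Fin n) (Fin n) K) a • (x.1 : N), by
    show eM K n • _ = _
    rw [← mul_smul, ← Algebra.commutes a (eM K n), mul_smul, corner_prop]⟩⟩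

variable {K n N} in
lemma corner_smul_val (a : K) (x : cornerSub K n N) :
    ((a • x : cornerSub K n N) : N) = algebraMap K (Matrix (Fin n) (Fin n) K) a • (x.1 : N) := rfl

instance : Module K (cornerSub K n N) where
  smul := (· • ·)
  one_smul x := Subtype.ext <| by rw [corner_smul_val, map_one, one_smul]
  mul_smul a b x := Subtype.ext <| by
    simp only [corner_smul_val, map_mul, mul_smul]
  smul_zero a := Subtype.ext <| by
    rw [corner_smul_val]
    show _ • (0 : N) = (0 : N)
    exact smul_zero _
  smul_add a x y := Subtype.ext <| by
    show algebraMap K _ a • ((x.1 : N) + y.1) = _ • (x.1 : N) + _ • (y.1 : N)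
    exact smul_add _ _ _
  add_smul a b x := Subtype.ext <| by
    show algebraMap K _ (a + b) • (x.1 : N) = _ • (x.1 : N) + _ • (x.1 : N)
    rw [map_add, add_smul]
  zero_smul x := Subtype.ext <| by
    show algebraMap K _ (0 : K) • (x.1 : N) = (0 : N)
    rw [map_zero, zero_smul]


/-- The corner functor from `Mₙ(K)`-modules to `K`-modules. -/
def cornerFunctor : ModuleCat.{0} (Matrix (Fin n) (Fin n) K) ⥤ ModuleCat.{0} K where
  obj N := ModuleCat.of K (cornerSub K n N)
  map {N N'} f := ModuleCat.ofHom
    { toFun := fun x => ⟨f.hom x.1, by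
        show eM K n • _ = _
        rw [← map_smul f.hom, corner_prop]⟩
      map_add' := fun x y => Subtype.ext (map_add f.hom _ _)
      map_smul' := fun a x => Subtype.ext (by
        show f.hom (algebraMap K _ a • (x.1 : N)) = algebraMap K _ a • (f.hom x.1 : N')
        rw [map_smul]) }
  map_id N := rfl
  map_comp f g := rfl

variable {K n} in
lemma eM_smul (v : Fin n → M) : eM K n • v = Pi.single 0 (v 0) := funext fun i => by
  rw [matSMul_apply, Pi.single_apply]
  by_cases hi : i = 0
  · subst hi
    rw [Finset.sum_eq_single 0 (by
      intro j _ hj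
      simp [eM, Matrix.single, Ne.symm hj]) (by simp)]
    simp [eM, Matrix.single]
  · rw [if_neg hi]
    refine Finset.sum_eq_zero fun j _ => ?_
    simp only [eM, Matrix.single, Matrix.of_apply, ite_smul, zero_smul,
      ite_eq_right_iff, and_imp]
    exact fun h _ => absurd h.symm hi

/-- The unit equivalence `M ≃ E₀₀ • Mⁿ`. -/
def unitEquiv (M : Type) [AddCommGroup M] [Module K M] :
    M ≃ₗ[K] cornerSub K n (Fin n → M) where
  toFun x := ⟨Pi.single 0 x, by
    show eM K n • _ = _
    rw [eM_smul]
    simp⟩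
  map_add' x y := by
    ext i
    by_cases hi : i = 0 <;> simp [hi, Pi.single_apply]
  map_smul' a x := by
    ext i
    rw [corner_smul_val, algebraMap_matSMul]
    by_cases hi : i = 0 <;> simp [hi, Pi.single_apply]
  invFun v := v.1 0
  left_inv x := by simp
  right_inv v := Subtype.ext ((eM_smul _).symm.trans (corner_prop v))

variable {K n} in
lemma key_matrix (A : Matrix (Fin n) (Fin n) K) (j : Fin n) :
    ∑ i, Matrix.single i (0 : Fin n) (A i j) =
      A * Matrix.single j 0 1 := by
  ext p q
  rw [Matrix.sum_apply]
  by_cases hq : q = 0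
  · subst hq
    rw [Matrix.mul_single_apply_same, mul_one,
      Finset.sum_eq_single p (by intro i _ hi; simp [Matrix.single, hi]) (by simp)]
    simp [Matrix.single]
  · rw [Matrix.mul_single_apply_of_ne (hbj := hq)]
    refine Finset.sum_eq_zero fun i _ => ?_
    simp only [Matrix.single, Matrix.of_apply, ite_eq_right_iff, and_imp]
    exact fun _ h => absurd h.symm hq

variable {K n} in
lemma sum_diag_eq_one : ∑ i : Fin n, Matrix.single i i (1 : K) = 1 := by
  ext p q
  rw [Matrix.sum_apply, Matrix.one_apply]
  by_cases hpq : p = q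
  · subst hpq
    rw [if_pos rfl, Finset.sum_eq_single p
      (by intro i _ hi; simp [Matrix.single, hi]) (by simp)]
    simp [Matrix.single]
  · rw [if_neg hpq]
    refine Finset.sum_eq_zero fun i _ => ?_
    simp only [Matrix.single, Matrix.of_apply, ite_eq_right_iff, and_imp]
    rintro rfl rfl
    exact absurd rfl hpq

/-- The counit equivalence `(E₀₀ • N)ⁿ ≃ N` of `Mₙ(K)`-modules. -/
def counitEquiv (N : Type) [AddCommGroup N] [Module (Matrix (Fin n) (Fin n) K) N] :
    (Fin n → cornerSub K n N) ≃ₗ[Matrix (Fin n) (Fin n) K] N where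
  toFun v := ∑ i, Matrix.single i (0 : Fin n) (1 : K) • ((v i : N))
  map_add' v w := by
    simp only [Pi.add_apply, AddSubgroup.coe_add, smul_add]
    rw [Finset.sum_add_distrib]
  map_smul' A v := by
    show ∑ i, _ • (((A • v) i : cornerSub K n N) : N) = A • ∑ i, _ • ((v i : N))
    have h1 : ∀ i, (((A • v) i : cornerSub K n N) : N)
        = ∑ j, algebraMap K (Matrix (Fin n) (Fin n) K) (A i j) • ((v j : N)) := by
      intro i
      show ((∑ j, A i j • v j : cornerSub K n N) : N) = _
      rw [AddSubmonoidClass.coe_finset_sum]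
      exact Finset.sum_congr rfl fun j _ => rfl
    simp only [h1, Finset.smul_sum]
    rw [Finset.sum_comm]
    refine Finset.sum_congr rfl fun j _ => ?_
    have h2 : ∀ i, Matrix.single i (0 : Fin n) (1 : K) •
        (algebraMap K (Matrix (Fin n) (Fin n) K) (A i j) • ((v j : N)))
        = Matrix.single i (0 : Fin n) (A i j) • ((v j : N)) := by
      intro i
      rw [← mul_smul, ← Algebra.commutes, ← Algebra.smul_def,
        Matrix.smul_single, smul_eq_mul, mul_one]
    simp only [h2, ← Finset.sum_smul, key_matrix, mul_smul]
  invFun x := fun i => ⟨Matrix.single (0 : Fin n) i (1 : K) • x, by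
    show eM K n • _ = _
    rw [← mul_smul, eM, Matrix.single_mul_single_same, one_mul]⟩
  left_inv v := by
    funext i
    apply Subtype.ext
    show Matrix.single (0 : Fin n) i (1 : K) •
      (∑ j : Fin n, Matrix.single j (0 : Fin n) (1 : K) • ((v j : N))) = (v i : N)
    rw [Finset.smul_sum]
    rw [Finset.sum_eq_single i (fun j _ hj => by
      rw [← mul_smul, Matrix.single_mul_single_of_ne (h := Ne.symm hj), zero_smul])
      (by simp)]
    rw [← mul_smul, Matrix.single_mul_single_same, one_mul]
    exact corner_prop (v i)
  right_inv x := by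
    show ∑ i : Fin n, Matrix.single i (0 : Fin n) (1 : K) •
      (Matrix.single (0 : Fin n) i (1 : K) • x) = x
    have : ∀ i : Fin n, Matrix.single i (0 : Fin n) (1 : K) •
        (Matrix.single (0 : Fin n) i (1 : K) • x)
        = Matrix.single i i (1 : K) • x := fun i => by
      rw [← mul_smul, Matrix.single_mul_single_same, one_mul]
    rw [Finset.sum_congr rfl fun i _ => this i, ← Finset.sum_smul, sum_diag_eq_one, one_smul]


/-- The Morita equivalence between `ModuleCat K` and `ModuleCat Mₙ(K)`. -/
def moritaEquiv : ModuleCat.{0} K ≌ ModuleCat.{0} (Matrix (Fin n) (Fin n) K) :=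
  CategoryTheory.Equivalence.mk (toMatMod K n) (cornerFunctor K n)
    (NatIso.ofComponents
      (fun M => (unitEquiv K n M).toModuleIso)
      (fun {M M'} f => by
        ext x
        refine Subtype.ext (funext fun i => ?_)
        show (Pi.single (0 : Fin n) (f x) : Fin n → ↑M') i
          = f ((Pi.single (0 : Fin n) x : Fin n → ↑M) i)
        by_cases hi : i = 0 <;> simp [hi, Pi.single_apply]))
    (NatIso.ofComponents
      (fun N => (counitEquiv K n N).toModuleIso)
      (fun {N N'} f => by
        ext v
        show ∑ i : Fin n, Matrix.single i (0 : Fin n) (1 : K) • f (v i).1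
          = f (∑ i : Fin n, Matrix.single i (0 : Fin n) (1 : K) • (v i).1)
        rw [map_sum]
        exact Finset.sum_congr rfl fun i _ => (map_smul f.hom _ _).symm))

end Morita


open Opposite

/-- The main contradiction: if `F (Mₙ(k))` is a singleton for a field `k` and `n ≥ 2`,
we get a fixed prime of a fixed-point-free automorphism of `kⁿ`. -/
lemma main_case (F : RingCatᵒᵖ ⥤ Type)
    (h : (forget₂ CommRingCat RingCat).op ⋙ F ≅ SpecFunctor)
    (k : Type) [Field k] (n : ℕ) (hn : 2 ≤ n)
    (hu : Unique (F.obj (op (RingCat.of (Matrix (Fin n) (Fin n) k))))) : False := by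
  haveI : NeZero n := ⟨by omega⟩
  -- the fixed-point-free permutation
  set π : Fin n ≃ Fin n := Equiv.addLeft (1 : Fin n) with hπdef
  have hπ : ∀ j : Fin n, π j ≠ j := by
    intro j hj
    have h1 : (1 : Fin n) + j = j := hj
    have : (1 : Fin n) = 0 := by
      have := congrArg (· + (-j)) h1
      simpa using this
    have := Fin.one_eq_zero_iff.mp this
    omega
  -- the ring homomorphisms
  set g : (Fin n → k) →+* (Fin n → k) :=
    Pi.ringHom (fun j => Pi.evalRingHom (fun _ => k) (π j)) with hgdef
  have hg : ∀ (d : Fin n → k) (j : Fin n), g d j = d (π j) := fun _ _ => rfl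
  set i : (Fin n → k) →+* Matrix (Fin n) (Fin n) k :=
    Matrix.diagonalRingHom (Fin n) k with hidef
  set σ : Matrix (Fin n) (Fin n) k →+* Matrix (Fin n) (Fin n) k :=
    (Matrix.reindexAlgEquiv k k π.symm).toRingEquiv.toRingHom with hσdef
  have hkey : σ.comp i = i.comp g := by
    refine RingHom.ext fun d => ?_
    show Matrix.reindex π.symm π.symm (Matrix.diagonal d) = Matrix.diagonal (g d)
    rw [Matrix.reindex_apply, Equiv.symm_symm, Matrix.submatrix_diagonal_equiv]
    rfl
  -- no prime of `kⁿ` is fixed by `g`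
  have nofix : ∀ P : PrimeSpectrum (Fin n → k), P.asIdeal.comap g ≠ P.asIdeal := by
    intro P hfix
    set u : Fin n → (Fin n → k) := fun j => Pi.single j 1 with hudef
    have hgu : ∀ j, g (u j) = u (π.symm j) := by
      intro j
      funext x
      rw [hg]
      simp only [hudef, Pi.single_apply]
      simp only [Equiv.eq_symm_apply]
    have hmem : ∀ j, u j ∈ P.asIdeal ↔ u (π.symm j) ∈ P.asIdeal := by
      intro j
      conv_lhs => rw [← hfix]
      rw [Ideal.mem_comap, hgu]
    have hmul : ∀ a b : Fin n, a ≠ b → u a * u b = 0 := by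
      intro a b hab
      funext x
      have hz : (if x = a then (1 : k) else 0) * (if x = b then 1 else 0) = 0 := by
        by_cases hxa : x = a
        · rw [if_pos hxa, if_neg (fun hxb => hab (hxa.symm.trans hxb)), mul_zero]
        · rw [if_neg hxa, zero_mul]
      simpa [hudef, Pi.single_apply] using hz
    have hex : ∃ j, u j ∉ P.asIdeal := by
      by_contra hall
      push_neg at hall
      have : (1 : Fin n → k) ∈ P.asIdeal := by
        have : ∑ j, u j ∈ P.asIdeal := Ideal.sum_mem _ fun j _ => hall j
        rwa [hudef, Finset.univ_sum_single (fun _ => (1 : k))] at this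
      exact P.isPrime.ne_top (P.asIdeal.eq_top_iff_one.mpr this)
    obtain ⟨j0, hj0⟩ := hex
    have hj0' : u (π.symm j0) ∉ P.asIdeal := fun hc => hj0 ((hmem j0).mpr hc)
    have hne : π.symm j0 ≠ j0 := by
      intro hc
      exact hπ j0 (by conv_lhs => rw [← hc]; exact (π.apply_symm_apply j0))
    have h0 : u (π.symm j0) * u j0 ∈ P.asIdeal := by
      rw [hmul _ _ hne]
      exact Ideal.zero_mem _
    rcases P.isPrime.mem_or_mem h0 with hc | hc
    · exact hj0' hc
    · exact hj0 hc
  -- the categorical argument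
  let A : CommRingCat := CommRingCat.of (Fin n → k)
  let Rm : RingCat := RingCat.of (Matrix (Fin n) (Fin n) k)
  let iR : RingCat.of (Fin n → k) ⟶ Rm := RingCat.ofHom i
  let σR : Rm ⟶ Rm := RingCat.ofHom σ
  let gR : RingCat.of (Fin n → k) ⟶ RingCat.of (Fin n → k) := RingCat.ofHom g
  let gC : A ⟶ A := CommRingCat.ofHom g
  haveI := hu
  let x0 : F.obj (op Rm) := hu.default
  let y : PrimeSpectrum (Fin n → k) := h.hom.app (op A) (F.map iR.op x0)
  have hcomp : gR ≫ iR = iR ≫ σR := by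
    show RingCat.ofHom (i.comp g) = RingCat.ofHom (σ.comp i)
    rw [hkey]
  have key : (SpecFunctor.map gC.op) y = y := by
    have nat := ConcreteCategory.congr_hom (h.hom.naturality gC.op) (F.map iR.op x0)
    have hx : F.map σR.op x0 = x0 := Subsingleton.elim _ _
    have e1 : F.map ((forget₂ CommRingCat RingCat).map gC).op (F.map iR.op x0)
        = F.map iR.op x0 := by
      have hforget : (forget₂ CommRingCat RingCat).map gC = gR := rfl
      have hop : iR.op ≫ gR.op = σR.op ≫ iR.op := by
        rw [← op_comp, ← op_comp, hcomp]
      rw [hforget, ← types_comp_apply (F.map iR.op) (F.map gR.op) x0, ← F.map_comp, hop,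
        F.map_comp, types_comp_apply, hx]
    calc (SpecFunctor.map gC.op) y = SpecFunctor.map gC.op (h.hom.app (op A) (F.map iR.op x0)) := rfl
      _ = h.hom.app (op A) (F.map ((forget₂ CommRingCat RingCat).map gC).op (F.map iR.op x0)) :=
          (nat).symm
      _ = h.hom.app (op A) (F.map iR.op x0) := by rw [e1]
      _ = h.hom.app (op A) (F.map iR.op x0) := rfl
  exact nofix y (congrArg PrimeSpectrum.asIdeal key)

end NoSpecAux

theorem no_morita_invariant_spec_functor (F : RingCatᵒᵖ ⥤ Type)
    (h : (forget₂ CommRingCat RingCat).op ⋙ F ≅ SpecFunctor) :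
    ¬ ((∃ (k : Type) (_ : Field k) (n : ℕ), 2 ≤ n ∧
          Nonempty (Unique (F.obj (Opposite.op (RingCat.of (Matrix (Fin n) (Fin n) k)))))) ∨
       (∀ R S : RingCat, Nonempty (ModuleCat.{0} ↥R ≌ ModuleCat.{0} ↥S) →
          Nonempty (F.obj (Opposite.op R) ≃ F.obj (Opposite.op S)))) := by
  rintro (⟨k, _, n, hn, ⟨hu⟩⟩ | h2)
  · exact NoSpecAux.main_case F h k n hn hu
  · have hME : Nonempty (ModuleCat.{0} ↥(RingCat.of ℚ) ≌
        ModuleCat.{0} ↥(RingCat.of (Matrix (Fin 2) (Fin 2) ℚ))) :=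
      ⟨NoSpecAux.moritaEquiv ℚ 2⟩
    obtain ⟨eqv⟩ := h2 (RingCat.of ℚ) (RingCat.of (Matrix (Fin 2) (Fin 2) ℚ)) hME
    haveI huQ : Unique (F.obj (Opposite.op (RingCat.of ℚ))) := by
      haveI : Unique (SpecFunctor.obj (Opposite.op (CommRingCat.of ℚ))) :=
        inferInstanceAs (Unique (PrimeSpectrum ℚ))
      exact Equiv.unique ((h.app (Opposite.op (CommRingCat.of ℚ))).toEquiv)
    exact NoSpecAux.main_case F h ℚ 2 le_rfl (Equiv.unique eqv.symm)
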